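/- Let α ∈ F_q* with α³ = 1, α ≠ 1, char F_q ≠ 2, 3, and let A₁ = [[α,α,0],[0,α,1],[0,0,α]] ∈ SL_3(F_q). Then A₁ is conjugate to its transpose in SL_3(F_q) if and only if the equation X³ = α⁻¹ has a solution in F_q. -/
import Mathlib


theorem stmt10 (F : Type*) [Field F] (hchar2 : ringChar F ≠ 2) (hchar3 : ringChar F ≠ 3)
    (α : F) (hα : α ^ 3 = 1) (hα1 : α ≠ 1) :
    let A₁ : Matrix (Fin 3) (Fin 3) F := !![α, α, 0; 0, α, 1; 0, 0, α]
    (∃ B : Matrix (Fin 3) (Fin 3) F, B.det = 1 ∧ B * A₁ = A₁.transpose * B) ↔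
      ∃ x : F, x ^ 3 = α⁻¹ := by
  intro A₁
  have hα0 : α ≠ 0 := by
    intro h; rw [h] at hα; simp at hα
  have hT : A₁.transpose = !![α, 0, 0; α, α, 0; 0, 1, α] := by
    ext i j; fin_cases i <;> fin_cases j <;> simp [A₁, Matrix.vecHead, Matrix.vecTail]
  constructor
  · rintro ⟨B, hdet, hcomm⟩
    rw [hT] at hcomm
    have h : ∀ i j, (B * A₁) i j = (!![α, 0, 0; α, α, 0; 0, 1, α] * B) i j := by
      intro i j; rw [hcomm]
    have h01 := h 0 1
    have h02 := h 0 2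
    have h11 := h 1 1
    have h12 := h 1 2
    have h21 := h 2 1
    simp [A₁, Matrix.mul_apply, Fin.sum_univ_three] at h01 h02 h11 h12 h21
    have hb01 : B 0 1 = 0 := by linear_combination h02
    have hb00 : B 0 0 = 0 := by
      have : B 0 0 * α = 0 := by linear_combination h01
      exact (mul_eq_zero.mp this).resolve_right hα0
    have hb10 : B 1 0 = 0 := by
      have : B 1 0 * α = 0 := by linear_combination h11 + α * hb01
      exact (mul_eq_zero.mp this).resolve_right hα0
    have hb11 : B 1 1 = α * B 0 2 := by linear_combination h12
    have hb20 : B 2 0 = B 0 2 := by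
      have : (B 2 0 - B 0 2) * α = 0 := by linear_combination h21 + hb11
      have h0 := (mul_eq_zero.mp this).resolve_right hα0
      linear_combination h0
    rw [Matrix.det_fin_three, hb00, hb01, hb10, hb11, hb20] at hdet
    refine ⟨-B 0 2, ?_⟩
    have hαinv : α * α⁻¹ = 1 := mul_inv_cancel₀ hα0
    have : α * (-B 0 2) ^ 3 = α * α⁻¹ := by
      rw [hαinv]; linear_combination hdet
    exact mul_left_cancel₀ hα0 this
  · rintro ⟨x, hx⟩
    refine ⟨!![0, 0, -x; 0, -x * α, 0; -x, 0, 0], ?_, ?_⟩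
    · rw [Matrix.det_fin_three]
      have h1 : α * α⁻¹ = 1 := mul_inv_cancel₀ hα0
      simp [Matrix.vecHead, Matrix.vecTail]
      linear_combination α * hx + h1
    · rw [hT]
      ext i j
      fin_cases i <;> fin_cases j <;>
        simp [A₁, Matrix.mul_apply, Fin.sum_univ_three, Matrix.vecHead, Matrix.vecTail] <;> ring
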